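/- Downward closure property of IEU (per-sequence, I-extension after I-extension): suppose S = α⊕i and S' = S⊕i', with i lexicographically before i' in each itemset. Then for every q-sequence Q containing S', IEU(S',Q) ≤ IEU(S,Q). -/

import Mathlib

open scoped Classical

/-- A sequence: a finite list of itemsets (finite sets of items). -/
abbrev PatSeq := List (Finset ℕ)

/-- `S` is a contiguous sub-sequence of `S'`: there is a contiguous block `T`
of `S'` such that each itemset of `S` is a subset of the corresponding itemset of `T`. -/
def CSub (S S' : PatSeq) : Prop :=
  ∃ T : PatSeq, List.Forall₂ (· ⊆ ·) S T ∧ T <:+: S'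

/-- `Q` has an instance of `S` at ending position `p`
(0-indexed index of the last itemset of the instance). -/
def Inst (Q S : PatSeq) (p : ℕ) : Prop :=
  S.length ≤ p + 1 ∧ p < Q.length ∧
    ∀ j < S.length, S.getD j ∅ ⊆ Q.getD (p + 1 - S.length + j) ∅

/-- `Q` contains `S`: it has at least one instance of `S`. -/
def Contains (Q S : PatSeq) : Prop := ∃ p, Inst Q S p

/-- Utility of the instance of `S` ending at position `p`, where `w j i` is the
(nonnegative) utility of item `i` in the `j`-th q-itemset. -/
def instUtil (w : ℕ → ℕ → ℕ) (S : PatSeq) (p : ℕ) : ℕ :=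
  ∑ j ∈ Finset.range S.length, ∑ i ∈ S.getD j ∅, w (p + 1 - S.length + j) i

/-- Total utility of the q-sequence `Q`. -/
def qUtil (w : ℕ → ℕ → ℕ) (Q : PatSeq) : ℕ :=
  ∑ j ∈ Finset.range Q.length, ∑ i ∈ Q.getD j ∅, w j i

/-- Utility of `S` in `Q`: the maximum instance utility over all ending positions. -/
noncomputable def seqUtil (w : ℕ → ℕ → ℕ) (Q S : PatSeq) : ℕ :=
  ((Finset.range Q.length).filter (fun p => Inst Q S p)).sup (fun p => instUtil w S p)

/-- I-extension: append item `i` to the last itemset of `α`. -/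
def IExt (α : PatSeq) (i : ℕ) : PatSeq := α.dropLast ++ [insert i (α.getLastD ∅)]

/-- S-extension: append the new itemset `{i}` to `α`. -/
def SExt (α : PatSeq) (i : ℕ) : PatSeq := α ++ [({i} : Finset ℕ)]

/-- Remaining utility of `Q` after the occurrence of item `i` in the `p`-th itemset:
utilities of items after `i` in the `p`-th itemset plus all later itemsets. -/
def ru (w : ℕ → ℕ → ℕ) (Q : PatSeq) (i p : ℕ) : ℕ :=
  (∑ x ∈ (Q.getD p ∅).filter (fun x => i < x), w p x)
    + ∑ j ∈ Finset.Ico (p + 1) Q.length, ∑ x ∈ Q.getD j ∅, w j x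

/-- IEU of the I-extension `α ⊕ i` in `Q`. -/
noncomputable def IEUI (w : ℕ → ℕ → ℕ) (Q α : PatSeq) (i : ℕ) : ℕ :=
  ((Finset.range Q.length).filter (fun p => Inst Q α p ∧ i ∈ Q.getD p ∅)).sup
    (fun p => instUtil w α p + w p i + ru w Q i p)

lemma append_getD_lt (l : List (Finset ℕ)) {j : ℕ} (h : j < l.length) (x : Finset ℕ) :
    (l ++ [x]).getD j ∅ = l.getD j ∅ := by
  simp [List.getD, List.getElem?_append_left h]

lemma append_getD_last (l : List (Finset ℕ)) (x : Finset ℕ) :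
    (l ++ [x]).getD l.length ∅ = x := by simp [List.getD_append_right]

lemma getD_last_eq (l : List (Finset ℕ)) (h : l ≠ []) :
    l.getD (l.length - 1) ∅ = l.getLastD ∅ := by
  rw [List.getLastD_eq_getLast?, List.getLast?_eq_getElem?, List.getD]

lemma dropLast_getD_lt (l : List (Finset ℕ)) {j : ℕ} (h : j < l.length - 1) :
    l.dropLast.getD j ∅ = l.getD j ∅ := by
  have hj : j < l.length := by omega
  simp [List.getD, List.getElem?_dropLast, h, List.getElem?_eq_getElem hj]

lemma iext_length (α : PatSeq) (i : ℕ) (h : α ≠ []) : (IExt α i).length = α.length := by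
  have := List.length_pos_iff.mpr h
  simp only [IExt, List.length_append, List.length_dropLast, List.length_singleton]
  omega

lemma iext_getD_lt (α : PatSeq) (i : ℕ) {j : ℕ} (h : j < α.length - 1) :
    (IExt α i).getD j ∅ = α.getD j ∅ := by
  rw [IExt, append_getD_lt _ (by simp [List.length_dropLast]; omega),
    dropLast_getD_lt _ h]

lemma iext_getD_last (α : PatSeq) (i : ℕ) (h : α ≠ []) :
    (IExt α i).getD (α.length - 1) ∅ = insert i (α.getLastD ∅) := by
  have := List.length_pos_iff.mpr h
  have hl : α.dropLast.length = α.length - 1 := by simp [List.length_dropLast]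
  rw [IExt, ← hl, append_getD_last]

/-- Downward closure property of IEU (per-sequence, I-extension after I-extension):
for `S = α ⊕ i` and `S' = S ⊕ i'` with `i` before `i'`,
`IEU(S',Q) ≤ IEU(S,Q)` for every `Q` containing `S'`. -/
theorem ieu_downward_iext (w : ℕ → ℕ → ℕ) (Q α : PatSeq) (i i' : ℕ)
    (hα : α ≠ []) (hi : i ∉ α.getLastD ∅) (hii' : i < i')
    (hc : Contains Q (IExt (IExt α i) i')) :
    IEUI w Q (IExt α i) i' ≤ IEUI w Q α i := by
  have hn1 : 1 ≤ α.length := List.length_pos_iff.mpr hα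
  have hlen : (IExt α i).length = α.length := iext_length α i hα
  unfold IEUI
  apply Finset.sup_le
  intro p hp
  simp only [Finset.mem_filter, Finset.mem_range] at hp
  obtain ⟨hpQ, ⟨h1, h2, h3⟩, hi'⟩ := hp
  rw [hlen] at h1 h3
  have hpn : p + 1 - α.length + (α.length - 1) = p := by omega
  have hiQ : i ∈ Q.getD p ∅ := by
    have := h3 (α.length - 1) (by omega)
    rw [iext_getD_last α i hα, hpn] at this
    exact this (Finset.mem_insert_self i _)
  have hinstα : Inst Q α p := by
    refine ⟨h1, h2, fun j hj => ?_⟩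
    rcases Nat.lt_or_ge j (α.length - 1) with h | h
    · rw [← iext_getD_lt α i h]; exact h3 j hj
    · have hj' : j = α.length - 1 := by omega
      subst hj'
      refine Finset.Subset.trans ?_ (h3 (α.length - 1) (by omega))
      rw [iext_getD_last α i hα, getD_last_eq α hα]
      exact Finset.subset_insert _ _
  have hmem : p ∈ (Finset.range Q.length).filter
      (fun p => Inst Q α p ∧ i ∈ Q.getD p ∅) := by
    simp only [Finset.mem_filter, Finset.mem_range]
    exact ⟨hpQ, hinstα, hiQ⟩
  refine le_trans ?_
    (Finset.le_sup (f := fun p => instUtil w α p + w p i + ru w Q i p) hmem)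
  have hinstU : instUtil w (IExt α i) p = instUtil w α p + w p i := by
    unfold instUtil
    rw [hlen]
    obtain ⟨m, hm⟩ : ∃ m, α.length = m + 1 := ⟨α.length - 1, by omega⟩
    have hm' : m = α.length - 1 := by omega
    rw [hm, Finset.sum_range_succ, Finset.sum_range_succ]
    have e1 : ∀ j ∈ Finset.range m,
        (∑ x ∈ (IExt α i).getD j ∅, w (p + 1 - (m + 1) + j) x)
          = ∑ x ∈ α.getD j ∅, w (p + 1 - (m + 1) + j) x := by
      intro j hj
      rw [iext_getD_lt α i (by simp at hj; omega)]
    rw [Finset.sum_congr rfl e1]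
    have hpm : p + 1 - (m + 1) + m = p := by omega
    have e2 : (∑ x ∈ (IExt α i).getD m ∅, w (p + 1 - (m + 1) + m) x)
        = (∑ x ∈ α.getD m ∅, w (p + 1 - (m + 1) + m) x) + w p i := by
      have hgl : (IExt α i).getD m ∅ = insert i (α.getLastD ∅) := by
        rw [hm']; exact iext_getD_last α i hα
      have hga : α.getD m ∅ = α.getLastD ∅ := by
        rw [hm']; exact getD_last_eq α hα
      rw [hgl, hga, Finset.sum_insert hi, hpm]
      ring
    rw [e2]
    ring
  have hru : w p i' + ru w Q i' p ≤ ru w Q i p := by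
    unfold ru
    have hsub : insert i' ((Q.getD p ∅).filter (fun x => i' < x))
        ⊆ (Q.getD p ∅).filter (fun x => i < x) := by
      intro x hx
      simp only [Finset.mem_insert, Finset.mem_filter] at hx ⊢
      rcases hx with rfl | ⟨hxm, hx⟩
      · exact ⟨hi', hii'⟩
      · exact ⟨hxm, lt_trans hii' hx⟩
    have hnotmem : i' ∉ (Q.getD p ∅).filter (fun x => i' < x) := by simp
    have hle : (∑ x ∈ insert i' ((Q.getD p ∅).filter (fun x => i' < x)), w p x)
        ≤ ∑ x ∈ (Q.getD p ∅).filter (fun x => i < x), w p x :=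
      Finset.sum_le_sum_of_subset hsub
    rw [Finset.sum_insert hnotmem] at hle
    omega
  rw [hinstU]
  omega
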